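/- Let (Ω, F, P) be a probability space, let T > 0, and let W₁, W₂ : Ω → ℝ be independent random variables, each with Gaussian law of mean 0 and variance T. Let y₀ > 0, K > 0, μ ∈ ℝ, σ > 0, and ρ ∈ (−1, 1), and define Y := y₀ · exp( μT + σ(ρ W₁ + √(1−ρ²) W₂) − σ²T/2 ). Then for every x with 0 < x < K, P-almost surely, P( (K − Y)⁺ ≤ x | σ(W₁) ) = 1 − Φ( ( ln((K−x)/y₀) − μT − σρW₁ + σ²T/2 ) / ( σ√(T(1−ρ²)) ) ), where (·)⁺ denotes the positive part and Φ is the cumulative distribution function of the standard normal distribution. -/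

import Mathlib

open MeasureTheory

/-- Cumulative distribution function of the standard normal distribution. -/
noncomputable def stdNormalCDF (x : ℝ) : ℝ :=
  (ProbabilityTheory.gaussianReal 0 1 (Set.Iic x)).toReal

lemma gauss_Ici_toReal {T : ℝ} (hT : 0 < T) (a : ℝ) :
    (ProbabilityTheory.gaussianReal 0 T.toNNReal (Set.Ici a)).toReal
      = 1 - stdNormalCDF (a / Real.sqrt T) := by
  have hsT : 0 < Real.sqrt T := Real.sqrt_pos.mpr hT
  have hmap : (ProbabilityTheory.gaussianReal 0 1).map (Real.sqrt T * ·)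
      = ProbabilityTheory.gaussianReal 0 T.toNNReal := by
    rw [ProbabilityTheory.gaussianReal_map_const_mul (Real.sqrt T)]
    congr 1
    · ring
    · ext
      simp [Real.sq_sqrt hT.le, Real.coe_toNNReal _ hT.le]
  have hpre : (Real.sqrt T * ·) ⁻¹' (Set.Ici a) = Set.Ici (a / Real.sqrt T) := by
    ext w
    simp only [Set.mem_preimage, Set.mem_Ici]
    rw [div_le_iff₀ hsT]
    constructor <;> intro h <;> nlinarith
  have h1 : ProbabilityTheory.gaussianReal 0 T.toNNReal (Set.Ici a)
      = ProbabilityTheory.gaussianReal 0 1 (Set.Ici (a / Real.sqrt T)) := by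
    rw [← hmap, Measure.map_apply (by fun_prop) measurableSet_Ici, hpre]
  set b := a / Real.sqrt T
  have hpt : ProbabilityTheory.gaussianReal 0 1 {b} = 0 :=
    ProbabilityTheory.gaussianReal_absolutelyContinuous 0 one_ne_zero (by simp)
  have hsplit : Set.Ici b = {b} ∪ Set.Ioi b := by
    ext w; simp only [Set.mem_Ici, Set.mem_union, Set.mem_singleton_iff, Set.mem_Ioi]
    constructor
    · intro h; rcases eq_or_lt_of_le h with h' | h'
      · exact Or.inl h'.symm
      · exact Or.inr h'
    · rintro (rfl | h) <;> [exact le_rfl; exact h.le]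
  have hdisj : Disjoint ({b} : Set ℝ) (Set.Ioi b) := by
    simp [Set.disjoint_singleton_left]
  have h2 : ProbabilityTheory.gaussianReal 0 1 (Set.Ici b)
      = ProbabilityTheory.gaussianReal 0 1 (Set.Ioi b) := by
    rw [hsplit, measure_union hdisj measurableSet_Ioi, hpt, zero_add]
  have h3 : ProbabilityTheory.gaussianReal 0 1 (Set.Ioi b)
      = 1 - ProbabilityTheory.gaussianReal 0 1 (Set.Iic b) := by
    rw [← Set.compl_Iic, measure_compl measurableSet_Iic (measure_ne_top _ _), measure_univ]
  rw [h1, h2, h3, ENNReal.toReal_sub_of_le (prob_le_one) ENNReal.one_ne_top,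
    ENNReal.toReal_one]
  rfl

theorem stmt9 {Ω : Type*} [mΩ : MeasurableSpace Ω] (P : Measure Ω) [IsProbabilityMeasure P]
    (T : ℝ) (hT : 0 < T)
    (W₁ W₂ : Ω → ℝ) (hW₁ : Measurable W₁) (hW₂ : Measurable W₂)
    (hlaw₁ : Measure.map W₁ P = ProbabilityTheory.gaussianReal 0 (Real.toNNReal T))
    (hlaw₂ : Measure.map W₂ P = ProbabilityTheory.gaussianReal 0 (Real.toNNReal T))
    (hindep : ProbabilityTheory.IndepFun W₁ W₂ P)
    (y₀ K μ σ ρ : ℝ) (hy₀ : 0 < y₀) (hK : 0 < K) (hσ : 0 < σ)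
    (hρ₁ : -1 < ρ) (hρ₂ : ρ < 1)
    (Y : Ω → ℝ)
    (hY : Y = fun ω =>
      y₀ * Real.exp (μ * T + σ * (ρ * W₁ ω + Real.sqrt (1 - ρ ^ 2) * W₂ ω) - σ ^ 2 * T / 2))
    (x : ℝ) (hx0 : 0 < x) (hxK : x < K) :
    P[Set.indicator {ω | max (K - Y ω) 0 ≤ x} (fun _ => (1 : ℝ)) |
        MeasurableSpace.comap W₁ (inferInstance : MeasurableSpace ℝ)]
      =ᵐ[P] fun ω => 1 - stdNormalCDF
        ((Real.log ((K - x) / y₀) - μ * T - σ * ρ * W₁ ω + σ ^ 2 * T / 2) /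
          (σ * Real.sqrt (T * (1 - ρ ^ 2)))) := by
  set ν := ProbabilityTheory.gaussianReal 0 T.toNNReal with hν
  have hρsq : 0 < 1 - ρ ^ 2 := by nlinarith
  have hs : 0 < Real.sqrt (1 - ρ ^ 2) := Real.sqrt_pos.mpr hρsq
  set s : ℝ := Real.sqrt (1 - ρ ^ 2) with hs_def
  have hσs : 0 < σ * s := mul_pos hσ hs
  set c : ℝ → ℝ := fun w =>
    (Real.log ((K - x) / y₀) - μ * T - σ * ρ * w + σ ^ 2 * T / 2) / (σ * s) with hc_def
  have hc_meas : Measurable c := by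
    apply Measurable.div_const
    exact ((measurable_const.sub ((measurable_const.mul measurable_id))).add measurable_const)
  set g : ℝ → ℝ := fun w => (ν (Set.Ici (c w))).toReal with hg_def
  -- the target function is g ∘ W₁
  have hsplit_sqrt : Real.sqrt (T * (1 - ρ ^ 2)) = Real.sqrt T * s := Real.sqrt_mul hT.le _
  have htarget : ∀ w : ℝ,
      1 - stdNormalCDF ((Real.log ((K - x) / y₀) - μ * T - σ * ρ * w + σ ^ 2 * T / 2) /
        (σ * Real.sqrt (T * (1 - ρ ^ 2)))) = g w := by
    intro w
    simp only [hg_def, hν]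
    rw [gauss_Ici_toReal hT]
    congr 1
    simp only [hc_def, hsplit_sqrt]
    rw [div_div]
    congr 1
    ring
  -- event rewrite
  have hA_eq : {ω | max (K - Y ω) 0 ≤ x} = {ω | c (W₁ ω) ≤ W₂ ω} := by
    ext ω
    simp only [Set.mem_setOf_eq, max_le_iff, hY]
    have hq : 0 < (K - x) / y₀ := div_pos (by linarith) hy₀
    constructor
    · rintro ⟨h1, -⟩
      have h2 : (K - x) / y₀ ≤ Real.exp (μ * T + σ * (ρ * W₁ ω + s * W₂ ω) - σ ^ 2 * T / 2) := by
        rw [div_le_iff₀ hy₀]; linarith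
      have h3 := (Real.log_le_iff_le_exp hq).mpr h2
      simp only [hc_def]
      rw [div_le_iff₀ hσs]
      nlinarith [h3]
    · intro h
      refine ⟨?_, hx0.le⟩
      have h3 : Real.log ((K - x) / y₀)
          ≤ μ * T + σ * (ρ * W₁ ω + s * W₂ ω) - σ ^ 2 * T / 2 := by
        simp only [hc_def] at h
        rw [div_le_iff₀ hσs] at h
        nlinarith [h]
      have h2 := (Real.log_le_iff_le_exp hq).mp h3
      rw [div_le_iff₀ hy₀] at h2
      linarith
  have hA_meas : MeasurableSet {ω | max (K - Y ω) 0 ≤ x} := by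
    rw [hA_eq]
    exact measurableSet_le (hc_meas.comp hW₁) hW₂
  -- measurability of g
  have hIci_meas : Measurable (fun a : ℝ => ν (Set.Ici a)) :=
    Antitone.measurable (fun a b hab => measure_mono (Set.Ici_subset_Ici.mpr hab))
  have hg_meas : Measurable g := ENNReal.measurable_toReal.comp (hIci_meas.comp hc_meas)
  have hg_nonneg : ∀ w, 0 ≤ g w := fun w => ENNReal.toReal_nonneg
  have hg_le_one : ∀ w, g w ≤ 1 := by
    intro w
    simp only [hg_def]
    calc (ν (Set.Ici (c w))).toReal ≤ (ν Set.univ).toReal :=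
          ENNReal.toReal_mono (measure_ne_top _ _) (measure_mono (Set.subset_univ _))
      _ = 1 := by simp
  have hm : MeasurableSpace.comap W₁ (inferInstance : MeasurableSpace ℝ) ≤ mΩ := hW₁.comap_le
  haveI : SigmaFinite (P.trim hm) := by
    haveI := isFiniteMeasure_trim (μ := P) hm
    infer_instance
  -- joint law
  have hjoint : P.map (fun ω => (W₁ ω, W₂ ω)) = ν.prod ν := by
    have h := (ProbabilityTheory.indepFun_iff_map_prod_eq_prod_map_map
      hW₁.aemeasurable hW₂.aemeasurable).mp hindep
    rw [hlaw₁, hlaw₂] at h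
    exact h
  have hfun : (fun ω => 1 - stdNormalCDF
        ((Real.log ((K - x) / y₀) - μ * T - σ * ρ * W₁ ω + σ ^ 2 * T / 2) /
          (σ * Real.sqrt (T * (1 - ρ ^ 2)))))
      = fun ω => g (W₁ ω) := funext fun ω => htarget (W₁ ω)
  rw [hfun]
  refine Filter.EventuallyEq.symm (ae_eq_condExp_of_forall_setIntegral_eq hm ?_ ?_ ?_ ?_)
  · exact (integrable_const (1 : ℝ)).indicator hA_meas
  · intro t ht hμt
    refine Integrable.integrableOn ?_
    refine Integrable.mono' (integrable_const (1 : ℝ))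
      ((hg_meas.comp hW₁).aestronglyMeasurable) (ae_of_all _ fun ω => ?_)
    rw [Real.norm_eq_abs, abs_of_nonneg (hg_nonneg _)]
    exact hg_le_one _
  · rintro t ⟨B, hB, rfl⟩ -
    -- RHS : ∫ indicator over W₁⁻¹ B
    have hrhs : ∫ ω in W₁ ⁻¹' B, Set.indicator {ω | max (K - Y ω) 0 ≤ x} (fun _ => (1:ℝ)) ω ∂P
        = (P ({ω | max (K - Y ω) 0 ≤ x} ∩ W₁ ⁻¹' B)).toReal := by
      rw [integral_indicator hA_meas, setIntegral_const, measureReal_def, Measure.restrict_apply hA_meas,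
        smul_eq_mul, mul_one]
    set S : Set (ℝ × ℝ) := {p : ℝ × ℝ | p.1 ∈ B ∧ c p.1 ≤ p.2} with hS_def
    have hS_meas : MeasurableSet S :=
      (hB.preimage measurable_fst).inter
        (measurableSet_le (hc_meas.comp measurable_fst) measurable_snd)
    have hpre : {ω | max (K - Y ω) 0 ≤ x} ∩ W₁ ⁻¹' B = (fun ω => (W₁ ω, W₂ ω)) ⁻¹' S := by
      rw [hA_eq]
      ext ω
      simp only [Set.mem_inter_iff, Set.mem_setOf_eq, Set.mem_preimage, hS_def, and_comm]
    have hmeasure : P ({ω | max (K - Y ω) 0 ≤ x} ∩ W₁ ⁻¹' B)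
        = ∫⁻ u in B, ν (Set.Ici (c u)) ∂ν := by
      rw [hpre, ← Measure.map_apply (hW₁.prodMk hW₂) hS_meas, hjoint,
        Measure.prod_apply hS_meas]
      have hsec : ∀ u : ℝ, ν (Prod.mk u ⁻¹' S)
          = B.indicator (fun u => ν (Set.Ici (c u))) u := by
        intro u
        by_cases hu : u ∈ B
        · have : Prod.mk u ⁻¹' S = Set.Ici (c u) := by
            ext v; simp [hS_def, hu, Set.mem_Ici]
          rw [this, Set.indicator_of_mem hu]
        · have : Prod.mk u ⁻¹' S = ∅ := by
            ext v; simp [hS_def, hu]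
          rw [this, Set.indicator_of_notMem hu, measure_empty]
      rw [lintegral_congr hsec, lintegral_indicator hB]
    -- LHS
    have hlhs : ∫ ω in W₁ ⁻¹' B, g (W₁ ω) ∂P = (∫⁻ u in B, ν (Set.Ici (c u)) ∂ν).toReal := by
      rw [← setIntegral_map hB (hg_meas.aestronglyMeasurable) hW₁.aemeasurable, hlaw₁]
      rw [integral_eq_lintegral_of_nonneg_ae (ae_of_all _ hg_nonneg)
        (hg_meas.aestronglyMeasurable)]
      congr 1
      refine lintegral_congr fun u => ?_
      simp only [hg_def]
      rw [ENNReal.ofReal_toReal (measure_ne_top _ _)]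
    rw [hrhs, hmeasure, hlhs]
  · refine StronglyMeasurable.aestronglyMeasurable ?_
    have hW₁' : Measurable[MeasurableSpace.comap W₁ inferInstance] W₁ :=
      fun t ht => ⟨t, ht, rfl⟩
    exact (hg_meas.comp hW₁').stronglyMeasurable
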